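/- Let (E_i)_{i∈I} and (F_j)_{j∈J} be finite families of d_B×d_A complex matrices. Let ψ ∈ ℂ^m ⊗ ℂ^{d_A} be a unit vector (viewed as ψ : Fin m × Fin d_A → ℂ), let φ := |ψ⟩⟨ψ| be the associated rank-one density matrix, and let τ be the reduced state of ψ on the second factor, i.e. the d_A×d_A matrix with entries τ_{a,a'} = Σ_r ψ(r,a)·conj(ψ(r,a')). Define ρ := Σ_i (I_m ⊗ E_i)·φ·(I_m ⊗ E_i)† and σ := Σ_j (I_m ⊗ F_j)·φ·(I_m ⊗ F_j)†. Then Tr(ρ·σ) = Σ_{i∈I, j∈J} |Tr(E_i†·F_j·τ)|². -/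

import Mathlib

open Matrix Kronecker ComplexOrder

lemma trace_vecMulVec_mul {n : Type*} [Fintype n] (u v : n → ℂ) (M : Matrix n n ℂ) :
    (Matrix.vecMulVec u v * M).trace = v ⬝ᵥ M.mulVec u := by
  simp only [Matrix.trace, Matrix.diag, Matrix.mul_apply, Matrix.vecMulVec_apply,
    dotProduct, Matrix.mulVec, Finset.mul_sum]
  rw [Finset.sum_comm]
  exact Finset.sum_congr rfl fun j _ => Finset.sum_congr rfl fun i _ => by ring

lemma vecMulVec_mul_vecMulVec {n : Type*} [Fintype n] (u v : n → ℂ) (M : Matrix n n ℂ) :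
    Matrix.vecMulVec u v * M * Matrix.vecMulVec u v
      = (v ⬝ᵥ M.mulVec u) • Matrix.vecMulVec u v := by
  ext i j
  simp only [Matrix.mul_apply, Matrix.vecMulVec_apply, Matrix.smul_apply,
    dotProduct, Matrix.mulVec, smul_eq_mul, Finset.mul_sum, Finset.sum_mul]
  rw [Finset.sum_comm]
  exact Finset.sum_congr rfl fun a _ => Finset.sum_congr rfl fun b _ => by ring

/-- For Kraus families `E`, `F`, a unit vector `ψ` with rank-one density
`φ = |ψ⟩⟨ψ|` and reduced state `τ`, the overlap `Tr(ρ·σ)` of the two channel outputs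
equals `Σ_{i,j} |Tr(E_i† F_j τ)|²`. -/
theorem parallel_output_overlap
    (m dA dB : ℕ) {I J : Type*} [Fintype I] [Fintype J]
    (E : I → Matrix (Fin dB) (Fin dA) ℂ) (F : J → Matrix (Fin dB) (Fin dA) ℂ)
    (ψ : Fin m × Fin dA → ℂ) (hψ : ∑ p, ‖ψ p‖ ^ 2 = 1)
    (φ : Matrix (Fin m × Fin dA) (Fin m × Fin dA) ℂ)
    (hφ : φ = Matrix.vecMulVec ψ (star ψ))
    (τ : Matrix (Fin dA) (Fin dA) ℂ)
    (hτ : ∀ a a', τ a a' = ∑ r, ψ (r, a) * (starRingEnd ℂ) (ψ (r, a')))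
    (ρ σ : Matrix (Fin m × Fin dB) (Fin m × Fin dB) ℂ)
    (hρ : ρ = ∑ i, ((1 : Matrix (Fin m) (Fin m) ℂ) ⊗ₖ E i) * φ *
      ((1 : Matrix (Fin m) (Fin m) ℂ) ⊗ₖ E i)ᴴ)
    (hσ : σ = ∑ j, ((1 : Matrix (Fin m) (Fin m) ℂ) ⊗ₖ F j) * φ *
      ((1 : Matrix (Fin m) (Fin m) ℂ) ⊗ₖ F j)ᴴ) :
    (ρ * σ).trace =
      ((∑ i, ∑ j, ‖((E i)ᴴ * F j * τ).trace‖ ^ 2 : ℝ) : ℂ) := by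
  subst hρ hσ hφ
  -- (1 ⊗ M)ᴴ (1 ⊗ N) = 1 ⊗ (Mᴴ N)
  have hkron : ∀ (M N : Matrix (Fin dB) (Fin dA) ℂ),
      ((1 : Matrix (Fin m) (Fin m) ℂ) ⊗ₖ M)ᴴ * ((1 : Matrix (Fin m) (Fin m) ℂ) ⊗ₖ N)
        = (1 : Matrix (Fin m) (Fin m) ℂ) ⊗ₖ (Mᴴ * N) := by
    intro M N
    have h1 : ((1 : Matrix (Fin m) (Fin m) ℂ) ⊗ₖ M)ᴴ
        = (1 : Matrix (Fin m) (Fin m) ℂ) ⊗ₖ Mᴴ := by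
      ext ⟨a, b⟩ ⟨c, d⟩
      by_cases h : a = c <;>
        simp [Matrix.conjTranspose_apply, Matrix.one_apply, h, eq_comm]
    rw [h1, ← Matrix.mul_kronecker_mul, Matrix.one_mul]
  -- key dot-product / trace identity
  have key : ∀ (M : Matrix (Fin dA) (Fin dA) ℂ),
      star ψ ⬝ᵥ (((1 : Matrix (Fin m) (Fin m) ℂ) ⊗ₖ M).mulVec ψ) = (M * τ).trace := by
    intro M
    have hmv : ∀ (r : Fin m) (a : Fin dA),
        (((1 : Matrix (Fin m) (Fin m) ℂ) ⊗ₖ M).mulVec ψ) (r, a)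
          = ∑ a', M a a' * ψ (r, a') := by
      intro r a
      simp [Matrix.mulVec, dotProduct, Fintype.sum_prod_type_right,
        Matrix.one_apply, ite_mul, mul_ite]
    calc star ψ ⬝ᵥ (((1 : Matrix (Fin m) (Fin m) ℂ) ⊗ₖ M).mulVec ψ)
        = ∑ r, ∑ a, star (ψ (r, a)) * ∑ a', M a a' * ψ (r, a') := by
          simp [dotProduct, Fintype.sum_prod_type, hmv]
      _ = (M * τ).trace := by
          simp only [Matrix.trace, Matrix.diag, Matrix.mul_apply, hτ,
            Finset.mul_sum]
          rw [Finset.sum_comm]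
          refine Finset.sum_congr rfl fun a _ => ?_
          rw [Finset.sum_comm]
          refine Finset.sum_congr rfl fun a' _ => Finset.sum_congr rfl fun r _ => ?_
          simp only [starRingEnd_apply]
          ring
  -- τ is Hermitian
  have hτh : τᴴ = τ := by
    ext a a'
    simp only [Matrix.conjTranspose_apply, hτ, star_sum, star_mul', starRingEnd_apply,
      star_star]
    exact Finset.sum_congr rfl fun r _ => mul_comm _ _
  rw [Finset.sum_mul, Matrix.trace_sum]
  push_cast
  refine Finset.sum_congr rfl fun i _ => ?_
  rw [Matrix.mul_sum, Matrix.trace_sum]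
  refine Finset.sum_congr rfl fun j _ => ?_
  set A := (1 : Matrix (Fin m) (Fin m) ℂ) ⊗ₖ E i with hA
  set B := (1 : Matrix (Fin m) (Fin m) ℂ) ⊗ₖ F j with hB
  set φ := Matrix.vecMulVec ψ (star ψ) with hφ
  set z := ((E i)ᴴ * F j * τ).trace with hz
  have h1 : A * φ * Aᴴ * (B * φ * Bᴴ) = A * (φ * (Aᴴ * B) * φ) * Bᴴ := by
    simp only [Matrix.mul_assoc]
  have hc : star ψ ⬝ᵥ (Aᴴ * B).mulVec ψ = z := by
    rw [hA, hB, hkron, key, Matrix.mul_assoc, ← Matrix.mul_assoc]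
  have hw : star ψ ⬝ᵥ (Bᴴ * A).mulVec ψ = starRingEnd ℂ z := by
    rw [hB, hA, hkron, key]
    have h2 : ((F j)ᴴ * E i) = ((E i)ᴴ * F j)ᴴ := by simp
    rw [h2, ← hτh, ← Matrix.conjTranspose_mul, Matrix.trace_conjTranspose]
    show starRingEnd ℂ _ = _
    rw [Matrix.trace_mul_comm]
  rw [h1, _root_.vecMulVec_mul_vecMulVec, hc, Matrix.mul_smul, Matrix.smul_mul,
    Matrix.trace_smul, Matrix.trace_mul_cycle, Matrix.trace_mul_comm,
    trace_vecMulVec_mul, hw]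
  rw [smul_eq_mul, Complex.mul_conj]
  norm_cast
  rw [Complex.sq_norm]
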